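/- Let H be a finite-dimensional real inner product space and let V, W ⊆ H be orthogonal linear subspaces (⟨v, w⟩ = 0 for all v ∈ V, w ∈ W). Let A, B be linear subspaces of V and let C, D be linear subspaces of W. Then d_H((A + C) ∩ B̄(0,1), (B + D) ∩ B̄(0,1)) ≤ d_H(A ∩ B̄(0,1), B ∩ B̄(0,1)) + d_H(C ∩ B̄(0,1), D ∩ B̄(0,1)), where A + C := {a + c : a ∈ A, c ∈ C} (and similarly B + D). -/

import Mathlib

open Metric Set
open scoped Pointwise RealInnerProductSpace

private lemma stmt19_aux {H : Type*} [NormedAddCommGroup H] [InnerProductSpace ℝ H]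
    [FiniteDimensional ℝ H]
    (V W : Submodule ℝ H) (horth : ∀ v ∈ V, ∀ w ∈ W, ⟪v, w⟫ = 0)
    (A B : Submodule ℝ H) (hA : A ≤ V) (hB : B ≤ V)
    (C D : Submodule ℝ H) (hC : C ≤ W) (hD : D ≤ W) :
    ∀ x ∈ ((A : Set H) + (C : Set H)) ∩ closedBall 0 1,
      ∃ y ∈ ((B : Set H) + (D : Set H)) ∩ closedBall 0 1,
        dist x y ≤
          hausdorffDist ((A : Set H) ∩ closedBall 0 1) ((B : Set H) ∩ closedBall 0 1) +
            hausdorffDist ((C : Set H) ∩ closedBall 0 1) ((D : Set H) ∩ closedBall 0 1) := by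
  rintro x ⟨hxadd, hxball⟩
  obtain ⟨a, ha, c, hc, rfl⟩ := hxadd
  have hac : ⟪a, c⟫ = 0 := horth a (hA ha) c (hC hc)
  have hxn : ‖a + c‖ ≤ 1 := by simpa using mem_closedBall_zero_iff.mp hxball
  have hsq : ‖a + c‖ ^ 2 = ‖a‖ ^ 2 + ‖c‖ ^ 2 := by
    have := norm_add_sq_real a c
    rw [hac] at this; linarith
  have ha1 : ‖a‖ ≤ 1 := by nlinarith [norm_nonneg a, norm_nonneg c, norm_nonneg (a + c)]
  have hc1 : ‖c‖ ≤ 1 := by nlinarith [norm_nonneg a, norm_nonneg c, norm_nonneg (a + c)]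
  set sB : Set H := (B : Set H) ∩ closedBall 0 1 with hsB
  set sD : Set H := (D : Set H) ∩ closedBall 0 1 with hsD
  have hBne : sB.Nonempty := ⟨0, B.zero_mem, by simp⟩
  have hDne : sD.Nonempty := ⟨0, D.zero_mem, by simp⟩
  have hBc : IsCompact sB := by
    refine Metric.isCompact_of_isClosed_isBounded
      ((Submodule.closed_of_finiteDimensional B).inter isClosed_closedBall) ?_
    exact (Metric.isBounded_closedBall).subset inter_subset_right
  have hDc : IsCompact sD := by
    refine Metric.isCompact_of_isClosed_isBounded
      ((Submodule.closed_of_finiteDimensional D).inter isClosed_closedBall) ?_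
    exact (Metric.isBounded_closedBall).subset inter_subset_right
  obtain ⟨b, hb, hab⟩ := hBc.exists_infDist_eq_dist hBne a
  obtain ⟨d, hd, hcd⟩ := hDc.exists_infDist_eq_dist hDne c
  have hABfin : EMetric.hausdorffEdist ((A : Set H) ∩ closedBall 0 1) sB ≠ ⊤ := by
    refine Metric.hausdorffEdist_ne_top_of_nonempty_of_bounded
      ⟨0, A.zero_mem, by simp⟩ hBne ?_ ?_
    · exact (Metric.isBounded_closedBall).subset inter_subset_right
    · exact (Metric.isBounded_closedBall).subset inter_subset_right
  have hCDfin : EMetric.hausdorffEdist ((C : Set H) ∩ closedBall 0 1) sD ≠ ⊤ := by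
    refine Metric.hausdorffEdist_ne_top_of_nonempty_of_bounded
      ⟨0, C.zero_mem, by simp⟩ hDne ?_ ?_
    · exact (Metric.isBounded_closedBall).subset inter_subset_right
    · exact (Metric.isBounded_closedBall).subset inter_subset_right
  have hdab : dist a b ≤
      hausdorffDist ((A : Set H) ∩ closedBall 0 1) ((B : Set H) ∩ closedBall 0 1) := by
    rw [← hab]
    exact Metric.infDist_le_hausdorffDist_of_mem ⟨ha, by simpa using ha1⟩ hABfin
  have hdcd : dist c d ≤
      hausdorffDist ((C : Set H) ∩ closedBall 0 1) ((D : Set H) ∩ closedBall 0 1) := by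
    rw [← hcd]
    exact Metric.infDist_le_hausdorffDist_of_mem ⟨hc, by simpa using hc1⟩ hCDfin
  set K : Submodule ℝ H := B ⊔ D with hK
  set y : H := (Submodule.orthogonalProjectionOnto K (a + c) : H) with hy
  refine ⟨y, ⟨?_, ?_⟩, ?_⟩
  · have : y ∈ (K : Set H) := (Submodule.orthogonalProjectionOnto K (a + c)).2
    rwa [hK, Submodule.coe_sup] at this
  · rw [mem_closedBall_zero_iff]
    calc ‖y‖ = ‖Submodule.orthogonalProjectionOnto K (a + c)‖ := (Submodule.norm_coe _)
      _ ≤ ‖Submodule.orthogonalProjectionOnto K‖ * ‖a + c‖ := (Submodule.orthogonalProjectionOnto K).le_opNorm (a + c)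
      _ ≤ 1 * 1 := by
          exact mul_le_mul (Submodule.orthogonalProjectionOnto_norm_le K) hxn (norm_nonneg _) zero_le_one
      _ = 1 := one_mul 1
  · have hbd : b + d ∈ K := Submodule.add_mem_sup hb.1 hd.1
    have hmin : dist (a + c) y ≤ dist (a + c) (b + d) := by
      rw [dist_eq_norm, dist_eq_norm, hy, ← Submodule.starProjection_apply, Submodule.starProjection_minimal]
      refine ciInf_le ⟨0, fun r ⟨v, hv⟩ => hv ▸ norm_nonneg _⟩ (⟨b + d, hbd⟩ : K)
    refine hmin.trans ?_
    calc dist (a + c) (b + d) ≤ dist a b + dist c d := dist_add_add_le a c b d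
      _ ≤ _ := add_le_add hdab hdcd

theorem stmt19 {H : Type*} [NormedAddCommGroup H] [InnerProductSpace ℝ H]
    [FiniteDimensional ℝ H]
    (V W : Submodule ℝ H) (horth : ∀ v ∈ V, ∀ w ∈ W, ⟪v, w⟫ = 0)
    (A B : Submodule ℝ H) (hA : A ≤ V) (hB : B ≤ V)
    (C D : Submodule ℝ H) (hC : C ≤ W) (hD : D ≤ W) :
    hausdorffDist (((A : Set H) + (C : Set H)) ∩ closedBall 0 1)
        (((B : Set H) + (D : Set H)) ∩ closedBall 0 1) ≤
      hausdorffDist ((A : Set H) ∩ closedBall 0 1) ((B : Set H) ∩ closedBall 0 1) +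
        hausdorffDist ((C : Set H) ∩ closedBall 0 1) ((D : Set H) ∩ closedBall 0 1) := by
  refine Metric.hausdorffDist_le_of_mem_dist
    (add_nonneg Metric.hausdorffDist_nonneg Metric.hausdorffDist_nonneg)
    (stmt19_aux V W horth A B hA hB C D hC hD) ?_
  intro x hx
  have := stmt19_aux V W horth B A hB hA D C hD hC x hx
  simpa [Metric.hausdorffDist_comm] using this
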